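/- The set of a ∈ ℂ for which the polynomial g_{3,a}(t,x) is not irreducible in the polynomial ring ℂ[t,x] is finite; in particular, for all but finitely many a ∈ ℂ the conic g_{3,a} = 0 is reduced and irreducible. -/

import Mathlib

lemma irreducible_neg_iff_aux {α : Type*} [Monoid α] [HasDistribNeg α] {p : α} :
    Irreducible (-p) ↔ Irreducible p := by
  rw [neg_eq_neg_one_mul]
  exact irreducible_isUnit_mul isUnit_one.neg

open Polynomial in
/-- A conic `x² - b x - (d + c t²)` with `c ≠ 0` and nonzero "discriminant"
`b²/4 + d ≠ 0` is irreducible in `(ℂ[t])[x]`. -/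
lemma key_irreducible {b c d : ℂ} (hc : c ≠ 0) (he : b ^ 2 / 4 + d ≠ 0) :
    Irreducible (X ^ 2 - C (C b) * X - C (C d + C c * X ^ 2) :
      Polynomial (Polynomial ℂ)) := by
  set D : Polynomial ℂ := C d + C c * X ^ 2 with hDdef
  set p : Polynomial (Polynomial ℂ) := X ^ 2 - C (C b) * X - C D with hpdef
  have hDform : D = C c * X ^ 2 + C 0 * X + C d := by rw [hDdef]; ring_nf; simp
  have hD2 : D.natDegree = 2 := by rw [hDform]; exact natDegree_quadratic hc
  have hDne : D ≠ 0 := by intro h; rw [h] at hD2; simp at hD2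
  have hmon : p.Monic := by
    have h : p = X ^ 2 - (C (C b) * X + C D) := by rw [hpdef]; ring
    rw [h]
    refine monic_X_pow_sub ?_
    refine lt_of_le_of_lt (degree_add_le _ _) (max_lt ?_ ?_)
    · exact lt_of_le_of_lt (degree_C_mul_X_le _) (by norm_num)
    · exact lt_of_le_of_lt degree_C_le (by norm_num)
  have hdeg : p.natDegree = 2 := by
    have h : p = C 1 * X ^ 2 + C (-(C b)) * X + C (-D) := by
      rw [hpdef]; simp only [map_neg, map_one]; ring
    rw [h]; exact natDegree_quadratic one_ne_zero
  by_contra hirr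
  obtain ⟨c₁, c₂, h0, h1⟩ := (hmon.not_irreducible_iff_exists_add_mul_eq_coeff hdeg).mp hirr
  have e0 : c₁ * c₂ = -D := by
    rw [← h0, hpdef]; simp
  have e1 : c₁ + c₂ = -(C b) := by
    rw [← h1, hpdef]; simp
  have hc₁ : c₁ ≠ 0 := by
    rintro rfl; rw [zero_mul] at e0; exact hDne (by rw [← neg_neg D, ← e0, neg_zero])
  have hc₂ : c₂ ≠ 0 := by
    rintro rfl; rw [mul_zero] at e0; exact hDne (by rw [← neg_neg D, ← e0, neg_zero])
  have hsum : c₁.natDegree + c₂.natDegree = 2 := by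
    rw [← natDegree_mul hc₁ hc₂, e0, natDegree_neg, hD2]
  have hle1 : c₂.natDegree ≤ max 0 c₁.natDegree := by
    have h : c₂ = -C b - c₁ := by rw [← e1]; ring
    rw [h]
    exact le_trans (natDegree_sub_le _ _) (by simp)
  have hle2 : c₁.natDegree ≤ max 0 c₂.natDegree := by
    have h : c₁ = -C b - c₂ := by rw [← e1]; ring
    rw [h]
    exact le_trans (natDegree_sub_le _ _) (by simp)
  simp only [Nat.zero_max] at hle1 hle2
  have hn1 : c₁.natDegree = 1 := by omega
  have hn2 : c₂.natDegree = 1 := by omega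
  set u₁ := c₁.coeff 1; set v₁ := c₁.coeff 0
  set u₂ := c₂.coeff 1; set v₂ := c₂.coeff 0
  have hc1e : c₁ = C u₁ * X + C v₁ := eq_X_add_C_of_natDegree_le_one hn1.le
  have hc2e : c₂ = C u₂ * X + C v₂ := eq_X_add_C_of_natDegree_le_one hn2.le
  rw [hc1e, hc2e] at e0 e1
  have q1 : u₁ + u₂ = 0 := by
    have := congrArg (fun q => Polynomial.coeff q 1) e1
    simpa using this
  have q0 : v₁ + v₂ = -b := by
    have := congrArg (fun q => Polynomial.coeff q 0) e1
    simpa using this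
  have eprod : C (u₁ * u₂) * X ^ 2 + C (u₁ * v₂ + v₁ * u₂) * X + C (v₁ * v₂)
      = -(C d + C c * X ^ 2) := by
    rw [← hDdef, ← e0]; simp only [C_mul, C_add]; ring
  have r2 : u₁ * u₂ = -c := by
    have := congrArg (fun q => Polynomial.coeff q 2) eprod
    simpa [mul_assoc, coeff_C_mul] using this
  have r1 : u₁ * v₂ + v₁ * u₂ = 0 := by
    have := congrArg (fun q => Polynomial.coeff q 1) eprod
    simpa [mul_assoc, coeff_C_mul] using this
  have r0 : v₁ * v₂ = -d := by
    have := congrArg (fun q => Polynomial.coeff q 0) eprod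
    simpa using this
  have hcu : c = u₁ ^ 2 := by linear_combination r2 - u₁ * q1
  have hu₁ : u₁ ≠ 0 := by
    intro h; exact hc (by rw [hcu, h]; ring)
  have hv : v₂ = v₁ := by
    apply mul_left_cancel₀ hu₁
    linear_combination r1 - v₁ * q1
  apply he
  linear_combination ((b - v₁ - v₂) / 4) * q0 + r0 + ((v₂ - v₁) / 4) * hv



open MvPolynomial

/-- The conic `g_{3,a}(t,x) = −a²t² + (17/4)a² + a²x − 3√−1·a·t² + (57/4)√−1·a + (5/4)t²
 − 161/16 + (17/4)x − x²` (`√−1 = i`), as an element of `ℂ[t,x]`; here `t = X 0`, `x = X 1`. -/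
noncomputable def g3 (a : ℂ) : MvPolynomial (Fin 2) ℂ :=
  C (-(a ^ 2)) * X 0 ^ 2 + C (17 / 4 * a ^ 2) + C (a ^ 2) * X 1
    - C (3 * Complex.I * a) * X 0 ^ 2 + C (57 / 4 * Complex.I * a)
    + C (5 / 4) * X 0 ^ 2 - C (161 / 16) + C (17 / 4) * X 1 - X 1 ^ 2

/-- The algebra isomorphism `ℂ[t,x] ≃ (ℂ[t])[x]` sending `X 0 = t` to `C X` and
`X 1 = x` to the outer variable `X`. -/
noncomputable def psiG3 : MvPolynomial (Fin 2) ℂ ≃ₐ[ℂ] Polynomial (Polynomial ℂ) :=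
  (renameEquiv ℂ (Equiv.swap 0 1)).trans <|
  (finSuccEquiv ℂ 1).trans <|
  Polynomial.mapAlgEquiv <|
  (finSuccEquiv ℂ 0).trans <| Polynomial.mapAlgEquiv (isEmptyAlgEquiv ℂ (Fin 0))

lemma psiG3_X1 : psiG3 (X 1) = Polynomial.X := by
  have : (X 1 : MvPolynomial (Fin 2) ℂ) = X (Fin.succ 0) := rfl
  simp [psiG3, this, finSuccEquiv_X_zero, finSuccEquiv_X_succ]

lemma psiG3_X0 : psiG3 (X 0) = Polynomial.C Polynomial.X := by
  have h : (Equiv.swap (0:Fin 2) 1) 0 = Fin.succ 0 := rfl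
  simp only [psiG3, AlgEquiv.trans_apply, renameEquiv_apply, rename_X, h, finSuccEquiv_X_succ,
    Polynomial.coe_mapAlgEquiv, Polynomial.map_C]
  simp [finSuccEquiv_X_zero]

lemma psiG3_C (z : ℂ) : psiG3 (C z) = Polynomial.C (Polynomial.C z) := by
  simp [psiG3, finSuccEquiv_apply]
  exact MvPolynomial.coeff_zero_C z

lemma psiG3_g3 (a : ℂ) : psiG3 (g3 a) =
    -(Polynomial.X ^ 2 - Polynomial.C (Polynomial.C (a ^ 2 + 17/4)) * Polynomial.X
      - Polynomial.C (Polynomial.C (17/4 * a^2 + 57/4 * Complex.I * a - 161/16)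
        + Polynomial.C (-(a^2) - 3 * Complex.I * a + 5/4) * Polynomial.X ^ 2)) := by
  simp only [g3, map_add, map_sub, map_mul, map_pow, psiG3_X0, psiG3_X1, psiG3_C]
  ring

/-- The set of `a ∈ ℂ` for which `g_{3,a}(t,x)` is not irreducible in `ℂ[t,x]` is finite;
in particular, for all but finitely many `a ∈ ℂ` the conic `g_{3,a} = 0` is reduced and
irreducible. -/
theorem finite_not_irreducible_g3 : {a : ℂ | ¬ Irreducible (g3 a)}.Finite := by
  classical
  -- the two "bad" root sets
  set p₁ : Polynomial ℂ := Polynomial.C (-1) * Polynomial.X ^ 2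
      + Polynomial.C (-(3 * Complex.I)) * Polynomial.X + Polynomial.C (5/4) with hp₁
  set p₂ : Polynomial ℂ := Polynomial.C (1/4) * Polynomial.X ^ 4
      + Polynomial.C (51/8) * Polynomial.X ^ 2 + Polynomial.C (57/4 * Complex.I) * Polynomial.X
      + Polynomial.C (289/64 - 161/16) with hp₂
  have hp₁ne : p₁ ≠ 0 := by
    intro h
    have := congrArg (fun q => Polynomial.coeff q 2) h
    simp [hp₁] at this
  have hp₂ne : p₂ ≠ 0 := by
    intro h
    have := congrArg (fun q => Polynomial.coeff q 4) h
    simp [hp₂, Polynomial.coeff_C_mul] at this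
  refine Set.Finite.subset ((Polynomial.finite_setOf_isRoot hp₁ne).union
    (Polynomial.finite_setOf_isRoot hp₂ne)) ?_
  intro a ha
  simp only [Set.mem_setOf_eq] at ha
  by_contra hmem
  simp only [Set.mem_union, Set.mem_setOf_eq, Polynomial.IsRoot, not_or] at hmem
  obtain ⟨h₁, h₂⟩ := hmem
  have hc : -(a^2) - 3 * Complex.I * a + 5/4 ≠ 0 := by
    intro h
    apply h₁
    simp only [hp₁, Polynomial.eval_add, Polynomial.eval_mul, Polynomial.eval_pow,
      Polynomial.eval_C, Polynomial.eval_X]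
    linear_combination h
  have he : (a ^ 2 + 17/4) ^ 2 / 4 + (17/4 * a^2 + 57/4 * Complex.I * a - 161/16) ≠ 0 := by
    intro h
    apply h₂
    simp only [hp₂, Polynomial.eval_add, Polynomial.eval_sub, Polynomial.eval_mul,
      Polynomial.eval_pow, Polynomial.eval_C, Polynomial.eval_X]
    linear_combination h
  apply ha
  have hirr : Irreducible (psiG3 (g3 a)) := by
    rw [psiG3_g3]
    exact irreducible_neg_iff_aux.mpr (key_irreducible hc he)
  exact (MulEquiv.irreducible_iff psiG3).mp hirr
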